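/- arXiv:2009.13180 — 3 statements merged into one kernel-verified Lean document; each statement's English description precedes it below -/
import Mathlib

section
/- Let W be a (d+1) × (d+1) real matrix with zero diagonal, and suppose the directed graph with an edge from i to j whenever W_{ij} ≠ 0 contains a directed cycle. Then Tr(exp(W ⊙ W)) > d + 1, where ⊙ is the Hadamard (entrywise) product. -/
open Matrix NormedSpace

lemma pow_entry_nonneg {m : ℕ} (A : Matrix (Fin m) (Fin m) ℝ)
    (hA : ∀ i j, 0 ≤ A i j) (n : ℕ) : ∀ i j, 0 ≤ (A ^ n) i j := by
  induction n with
  | zero => intro i j; simp [Matrix.one_apply]; positivity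
  | succ n ih =>
    intro i j
    rw [pow_succ, Matrix.mul_apply]
    exact Finset.sum_nonneg fun z _ => mul_nonneg (ih i z) (hA z j)

lemma pow_path_pos {m : ℕ} (A : Matrix (Fin m) (Fin m) ℝ)
    (hA : ∀ i j, 0 ≤ A i j) (k : ℕ) (g : ℕ → Fin m)
    (hg : ∀ i < k, 0 < A (g i) (g (i + 1))) :
    0 < (A ^ k) (g 0) (g k) := by
  induction k with
  | zero => simp [Matrix.one_apply]
  | succ k ih =>
    rw [pow_succ, Matrix.mul_apply]
    apply Finset.sum_pos'
    · intro z _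
      exact mul_nonneg (pow_entry_nonneg A hA k _ _) (hA _ _)
    · refine ⟨g k, Finset.mem_univ _, ?_⟩
      exact mul_pos (ih fun i hi => hg i (by omega)) (hg k (by omega))

set_option maxHeartbeats 1000000 in
theorem stmt11 (d : ℕ) (W : Matrix (Fin (d + 1)) (Fin (d + 1)) ℝ)
    (hdiag : ∀ i, W i i = 0)
    (hcycle : ∃ k : ℕ, 1 ≤ k ∧ ∃ f : Fin (k + 1) → Fin (d + 1),
      f 0 = f (Fin.last k) ∧ ∀ i : Fin k, W (f i.castSucc) (f i.succ) ≠ 0) :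
    ((d : ℝ) + 1) < (exp (Matrix.hadamard W W)).trace := by
  obtain ⟨k, hk1, f, hf0, hf⟩ := hcycle
  set A := Matrix.hadamard W W with hAdef
  have hA : ∀ i j, 0 ≤ A i j := by
    intro i j; simp [hAdef, Matrix.hadamard_apply, mul_self_nonneg]
  -- the path as a function on ℕ
  set g : ℕ → Fin (d + 1) := fun n => if h : n ≤ k then f ⟨n, by omega⟩ else f 0 with hgdef
  have hgpath : ∀ i < k, 0 < A (g i) (g (i + 1)) := by
    intro i hi
    have h1 : g i = f (⟨i, hi⟩ : Fin k).castSucc := by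
      simp only [hgdef]; rw [dif_pos (by omega)]; rfl
    have h2 : g (i + 1) = f (⟨i, hi⟩ : Fin k).succ := by
      simp only [hgdef]; rw [dif_pos (by omega)]; rfl
    rw [h1, h2]
    have := hf ⟨i, hi⟩
    simp only [hAdef, Matrix.hadamard_apply]
    exact mul_self_pos.mpr this
  have hg0 : g 0 = f 0 := by
    simp only [hgdef]; rw [dif_pos (Nat.zero_le k)]; rfl
  have hgk : g k = f 0 := by
    simp only [hgdef]; rw [dif_pos le_rfl, hf0]; congr 1
  have hpow : 0 < (A ^ k) (f 0) (f 0) := by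
    have := pow_path_pos A hA k g hgpath
    rwa [hg0, hgk] at this
  -- trace of powers nonneg
  have htr_nonneg : ∀ n : ℕ, 0 ≤ (A ^ n).trace := by
    intro n
    exact Finset.sum_nonneg fun i _ => pow_entry_nonneg A hA n i i
  have htrk : 0 < (A ^ k).trace := by
    apply Finset.sum_pos'
    · intro i _; exact pow_entry_nonneg A hA k i i
    · exact ⟨f 0, Finset.mem_univ _, hpow⟩
  letI : SeminormedRing (Matrix (Fin (d+1)) (Fin (d+1)) ℝ) := Matrix.linftyOpSemiNormedRing
  letI : NormedRing (Matrix (Fin (d+1)) (Fin (d+1)) ℝ) := Matrix.linftyOpNormedRing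
  letI : NormedAlgebra ℝ (Matrix (Fin (d+1)) (Fin (d+1)) ℝ) := Matrix.linftyOpNormedAlgebra
  have hsum : HasSum (fun n : ℕ => ((n.factorial : ℝ))⁻¹ • A ^ n) (exp A) :=
    NormedSpace.exp_series_hasSum_exp' (𝕂 := ℝ) A
  have hTcont : Continuous (fun M : Matrix (Fin (d+1)) (Fin (d+1)) ℝ => M.trace) :=
    Continuous.matrix_trace continuous_id
  have hsum2 : HasSum (fun n : ℕ => ((n.factorial : ℝ))⁻¹ * (A ^ n).trace) ((exp A).trace) := by
    have := hsum.map (Matrix.traceAddMonoidHom (Fin (d+1)) ℝ) hTcont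
    simpa [Function.comp_def, Matrix.traceAddMonoidHom, Matrix.trace_smul, smul_eq_mul] using this
  have hterm : ∀ n : ℕ, 0 ≤ ((n.factorial : ℝ))⁻¹ * (A ^ n).trace := by
    intro n
    exact mul_nonneg (by positivity) (htr_nonneg n)
  have h0 : ((0 : ℕ).factorial : ℝ)⁻¹ * (A ^ 0).trace = (d : ℝ) + 1 := by
    simp [Matrix.trace_one]
  have := hsum2.tsum_eq
  rw [← this]
  have hkne : k ≠ 0 := by omega
  calc ((d:ℝ) + 1) < ∑ n ∈ ({0, k} : Finset ℕ), ((n.factorial : ℝ))⁻¹ * (A ^ n).trace := by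
        rw [Finset.sum_pair hkne.symm, h0]
        have : 0 < ((k.factorial : ℝ))⁻¹ * (A ^ k).trace :=
          mul_pos (by positivity) htrk
        linarith
    _ ≤ ∑' n : ℕ, ((n.factorial : ℝ))⁻¹ * (A ^ n).trace :=
        Summable.sum_le_tsum _ (fun n _ => hterm n) hsum2.summable
end

section
/- Let W be a (d+1) × (d+1) real matrix such that the directed graph with an edge from i to j whenever W_{ij} ≠ 0 is acyclic. Then Tr(exp(W ⊙ W)) = d + 1. -/
open Matrix NormedSpace

theorem stmt12 (d : ℕ) (W : Matrix (Fin (d + 1)) (Fin (d + 1)) ℝ)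
    (hacyclic : ¬ ∃ k : ℕ, 1 ≤ k ∧ ∃ f : Fin (k + 1) → Fin (d + 1),
      f 0 = f (Fin.last k) ∧ ∀ i : Fin k, W (f i.castSucc) (f i.succ) ≠ 0) :
    (exp (Matrix.hadamard W W)).trace = (d : ℝ) + 1 := by
  set A := Matrix.hadamard W W with hA
  -- Extract a path from a nonzero entry of a power
  have hpath : ∀ n (i j : Fin (d+1)), (A ^ n) i j ≠ 0 →
      ∃ f : ℕ → Fin (d+1), f 0 = i ∧ f n = j ∧
        ∀ m, m < n → W (f m) (f (m+1)) ≠ 0 := by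
    intro n
    induction n with
    | zero =>
      intro i j h
      rw [pow_zero] at h
      have hij : i = j := by
        by_contra hne
        simp [Matrix.one_apply, hne] at h
      exact ⟨fun _ => i, rfl, hij ▸ rfl, fun m hm => absurd hm (Nat.not_lt_zero m)⟩
    | succ n ih =>
      intro i j h
      rw [pow_succ, Matrix.mul_apply] at h
      obtain ⟨k, -, hk⟩ := Finset.exists_ne_zero_of_sum_ne_zero h
      have h1 : (A ^ n) i k ≠ 0 := left_ne_zero_of_mul hk
      have h2 : A k j ≠ 0 := right_ne_zero_of_mul hk
      have hW : W k j ≠ 0 := by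
        intro h0
        apply h2
        simp [hA, Matrix.hadamard_apply, h0]
      obtain ⟨f, hf0, hfn, hfe⟩ := ih i k h1
      refine ⟨fun m => if m ≤ n then f m else j, by simp [hf0], by simp, ?_⟩
      intro m hm
      rcases Nat.lt_succ_iff_lt_or_eq.mp hm with hlt | heq
      · have h1' : m ≤ n := le_of_lt hlt
        have h2' : m + 1 ≤ n := Nat.succ_le_of_lt hlt
        simpa [h1', h2'] using hfe m hlt
      · subst heq
        have h1' : m ≤ m := le_refl m
        have h2' : ¬ (m + 1 ≤ m) := by omega
        simpa [h1', h2', hfn] using hW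
  -- A path with equal endpoints gives a cycle, contradicting acyclicity
  have hcycle : ∀ (k : ℕ), 1 ≤ k → ∀ f : ℕ → Fin (d+1), f 0 = f k →
      (∀ m, m < k → W (f m) (f (m+1)) ≠ 0) → False := by
    intro k hk f hfk hfe
    apply hacyclic
    refine ⟨k, hk, fun i => f i.val, by simpa using hfk, fun i => ?_⟩
    simpa using hfe i.val i.isLt
  -- traces of positive powers vanish
  have htr : ∀ n, 1 ≤ n → (A ^ n).trace = 0 := by
    intro n hn
    rw [Matrix.trace]
    apply Finset.sum_eq_zero
    intro i _
    by_contra h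
    obtain ⟨f, hf0, hfn, hfe⟩ := hpath n i i h
    exact hcycle n hn f (by rw [hf0, hfn]) hfe
  -- A is nilpotent
  have hnil : ∀ n, d + 1 ≤ n → A ^ n = 0 := by
    have h0 : A ^ (d+1) = 0 := by
      ext i j
      by_contra h
      obtain ⟨f, hf0, hfn, hfe⟩ := hpath (d+1) i j (by simpa using h)
      obtain ⟨a, b, hne, hab⟩ :=
        Fintype.exists_ne_map_eq_of_card_lt (fun m : Fin (d+2) => f m.val)
          (by simp)
      -- wlog a < b
      rcases hne.lt_or_gt with hlt | hlt
      · refine hcycle (b.val - a.val) (by omega) (fun m => f (a.val + m)) ?_ ?_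
        · show f (a.val + 0) = f (a.val + (b.val - a.val))
          convert hab using 2 <;> omega
        · intro m hm
          have : a.val + m < d + 1 := by
            have hb : b.val < d + 2 := b.isLt
            omega
          simpa [Nat.add_assoc] using hfe (a.val + m) this
      · refine hcycle (a.val - b.val) (by omega) (fun m => f (b.val + m)) ?_ ?_
        · show f (b.val + 0) = f (b.val + (a.val - b.val))
          convert hab.symm using 2 <;> omega
        · intro m hm
          have : b.val + m < d + 1 := by
            have ha : a.val < d + 2 := a.isLt
            omega
          simpa [Nat.add_assoc] using hfe (b.val + m) this
    intro n hn
    obtain ⟨m, rfl⟩ := Nat.exists_eq_add_of_le hn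
    rw [pow_add, h0, zero_mul]
  -- exp is a finite sum
  have hexp : exp A = ∑ n ∈ Finset.range (d+1), ((n.factorial : ℝ))⁻¹ • A ^ n := by
    rw [exp_eq_tsum (𝕂 := ℝ)]
    refine tsum_eq_sum ?_
    intro n hn
    rw [hnil n (by simpa using Finset.mem_range.not.mp hn), smul_zero]
  rw [hexp, Matrix.trace_sum]
  have : ∀ n ∈ Finset.range (d+1),
      (((n.factorial : ℝ))⁻¹ • A ^ n).trace = if n = 0 then (d : ℝ) + 1 else 0 := by
    intro n _
    rcases Nat.eq_zero_or_pos n with rfl | hpos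
    · simp [Matrix.trace_one]
    · rw [Matrix.trace_smul, htr n hpos, smul_zero, if_neg (by omega)]
  rw [Finset.sum_congr rfl this, Finset.sum_ite_eq' (Finset.range (d+1)) 0,
    if_pos (by simp)]
end

section
/- Let f(x) = φ(x W_1) W_2 where φ is coordinatewise ReLU and W_1, W_2 are weight matrices, and let f'(x) = φ(x (W_1 + U_1)) (W_2 + U_2) be the perturbed network. Then for any input x with ||x||_2 ≤ B, ||f(x) − f'(x)||_2 ≤ B (||U_1||_2 (||W_2||_2 + ||U_2||_2) + ||W_1||_2 ||U_2||_2), where ||·||_2 on matrices denotes the spectral norm. -/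
open scoped Matrix.Norms.L2Operator

/-- A two-layer ReLU network `x ↦ φ(x W₁) W₂` (with coordinatewise ReLU `φ`). -/
noncomputable def net2 {n p q : ℕ} (W1 : Matrix (Fin n) (Fin p) ℝ)
    (W2 : Matrix (Fin p) (Fin q) ℝ) (x : EuclideanSpace ℝ (Fin n)) :
    EuclideanSpace ℝ (Fin q) :=
  WithLp.toLp 2 (Matrix.vecMul (fun i => max (Matrix.vecMul (fun j => x j) W1 i) 0) W2)

/-- View a plain vector as an element of Euclidean space. -/
def toEuc {k : ℕ} (v : Fin k → ℝ) : EuclideanSpace ℝ (Fin k) := WithLp.toLp 2 v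

lemma euc_norm_le_of_abs_le {k : ℕ} (u v : EuclideanSpace ℝ (Fin k))
    (h : ∀ i, |u i| ≤ |v i|) : ‖u‖ ≤ ‖v‖ := by
  rw [EuclideanSpace.norm_eq, EuclideanSpace.norm_eq]
  apply Real.sqrt_le_sqrt
  apply Finset.sum_le_sum
  intro i _
  simp only [Real.norm_eq_abs]
  exact pow_le_pow_left₀ (abs_nonneg _) (h i) 2

lemma norm_vecMul_le {a b : ℕ} (M : Matrix (Fin a) (Fin b) ℝ)
    (v : EuclideanSpace ℝ (Fin a)) :
    ‖toEuc (Matrix.vecMul v M)‖ ≤ ‖M‖ * ‖v‖ := by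
  have h1 : toEuc (Matrix.vecMul v M) = Matrix.mulVec M.conjTranspose v := by
    have h2 : M.conjTranspose = Matrix.transpose M := by
      ext i j; simp [Matrix.conjTranspose_apply]
    rw [h2, toEuc, Matrix.mulVec_transpose]
  have h3 := Matrix.l2_opNorm_mulVec M.conjTranspose v
  rw [Matrix.l2_opNorm_conjTranspose] at h3
  have h4 : toEuc (Matrix.vecMul v M)
      = (EuclideanSpace.equiv (Fin b) ℝ).symm (M.conjTranspose.mulVec v) := by ext i; exact congrFun h1 i
  rw [h4]
  exact h3

theorem stmt14 {n p q : ℕ} (W1 U1 : Matrix (Fin n) (Fin p) ℝ)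
    (W2 U2 : Matrix (Fin p) (Fin q) ℝ) (B : ℝ)
    (x : EuclideanSpace ℝ (Fin n)) (hx : ‖x‖ ≤ B) :
    ‖net2 W1 W2 x - net2 (W1 + U1) (W2 + U2) x‖ ≤
      B * (‖U1‖ * (‖W2‖ + ‖U2‖) + ‖W1‖ * ‖U2‖) := by
  set a : EuclideanSpace ℝ (Fin p) :=
    toEuc (fun i => max (Matrix.vecMul (fun j => x j) W1 i) 0) with ha
  set a' : EuclideanSpace ℝ (Fin p) :=
    toEuc (fun i => max (Matrix.vecMul (fun j => x j) (W1 + U1) i) 0) with ha'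
  have hBnn : 0 ≤ B := le_trans (norm_nonneg x) hx
  have hai : ∀ i, a i = max (Matrix.vecMul (fun j => x j) W1 i) 0 := fun i => rfl
  have ha'i : ∀ i, a' i = max (Matrix.vecMul (fun j => x j) (W1 + U1) i) 0 := fun i => rfl
  -- bound ‖a - a'‖ ≤ ‖U1‖ * ‖x‖
  have hdiff : ‖a - a'‖ ≤ ‖U1‖ * ‖x‖ := by
    have h1 : ‖a - a'‖ ≤ ‖toEuc (Matrix.vecMul (fun j => x j) U1)‖ := by
      apply euc_norm_le_of_abs_le
      intro i
      have hsub : (a - a') i = a i - a' i := rfl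
      rw [hsub, hai, ha'i]
      have hrw : Matrix.vecMul (fun j => x j) (W1 + U1) i
          = Matrix.vecMul (fun j => x j) W1 i + Matrix.vecMul (fun j => x j) U1 i := by
        rw [Matrix.vecMul_add]; rfl
      rw [hrw]
      have htE : toEuc (Matrix.vecMul (fun j => x j) U1) i
          = Matrix.vecMul (fun j => x j) U1 i := rfl
      rw [htE]
      calc |max (Matrix.vecMul (fun j => x j) W1 i) 0
            - max (Matrix.vecMul (fun j => x j) W1 i + Matrix.vecMul (fun j => x j) U1 i) 0|
          ≤ |Matrix.vecMul (fun j => x j) W1 i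
            - (Matrix.vecMul (fun j => x j) W1 i + Matrix.vecMul (fun j => x j) U1 i)| :=
            abs_max_sub_max_le_abs _ _ _
        _ = |Matrix.vecMul (fun j => x j) U1 i| := by rw [abs_sub_comm]; ring_nf
    exact h1.trans (norm_vecMul_le U1 x)
  -- bound ‖a‖ ≤ ‖W1‖ * ‖x‖
  have hanorm : ‖a‖ ≤ ‖W1‖ * ‖x‖ := by
    have h1 : ‖a‖ ≤ ‖toEuc (Matrix.vecMul (fun j => x j) W1)‖ := by
      apply euc_norm_le_of_abs_le
      intro i
      rw [hai]
      have htE : toEuc (Matrix.vecMul (fun j => x j) W1) i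
          = Matrix.vecMul (fun j => x j) W1 i := rfl
      rw [htE]
      rcases le_or_gt (Matrix.vecMul (fun j => x j) W1 i) 0 with h | h
      · rw [max_eq_right h]; simp
      · rw [max_eq_left h.le]
    exact h1.trans (norm_vecMul_le W1 x)
  -- decomposition
  have hdecomp : net2 W1 W2 x - net2 (W1 + U1) (W2 + U2) x
      = toEuc (Matrix.vecMul (a - a') (W2 + U2)) - toEuc (Matrix.vecMul a U2) := by
    unfold net2
    ext i
    show Matrix.vecMul (fun i => max (Matrix.vecMul (fun j => x j) W1 i) 0) W2 i
        - Matrix.vecMul (fun i => max (Matrix.vecMul (fun j => x j) (W1 + U1) i) 0) (W2 + U2) i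
      = Matrix.vecMul (a - a') (W2 + U2) i - Matrix.vecMul a U2 i
    have hsub : (fun j => (a - a') j) = fun j => a j - a' j := rfl
    simp only [Matrix.vecMul, dotProduct, Matrix.add_apply]
    rw [show (a - a' : EuclideanSpace ℝ (Fin p)).ofLp = fun j => a j - a' j from rfl]
    simp only [← Finset.sum_sub_distrib, ← Finset.sum_add_distrib]
    apply Finset.sum_congr rfl
    intro j _
    rw [hai, ha'i]
    simp only [Matrix.vecMul, dotProduct, Matrix.add_apply]
    ring
  rw [hdecomp]
  calc ‖toEuc (Matrix.vecMul (a - a') (W2 + U2)) - toEuc (Matrix.vecMul a U2)‖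
      ≤ ‖toEuc (Matrix.vecMul (a - a') (W2 + U2))‖ + ‖toEuc (Matrix.vecMul a U2)‖ :=
        norm_sub_le _ _
    _ ≤ ‖W2 + U2‖ * ‖a - a'‖ + ‖U2‖ * ‖a‖ :=
        add_le_add (norm_vecMul_le _ _) (norm_vecMul_le _ _)
    _ ≤ (‖W2‖ + ‖U2‖) * (‖U1‖ * ‖x‖) + ‖U2‖ * (‖W1‖ * ‖x‖) := by
        apply add_le_add
        · exact mul_le_mul (norm_add_le _ _) hdiff (norm_nonneg _) (by positivity)
        · exact mul_le_mul_of_nonneg_left hanorm (norm_nonneg _)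
    _ ≤ (‖W2‖ + ‖U2‖) * (‖U1‖ * B) + ‖U2‖ * (‖W1‖ * B) := by
        apply add_le_add
        · exact mul_le_mul_of_nonneg_left (mul_le_mul_of_nonneg_left hx (norm_nonneg _))
            (by positivity)
        · exact mul_le_mul_of_nonneg_left (mul_le_mul_of_nonneg_left hx (norm_nonneg _))
            (norm_nonneg _)
    _ = B * (‖U1‖ * (‖W2‖ + ‖U2‖) + ‖W1‖ * ‖U2‖) := by ring
end
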